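/- arXiv:2510.05591 — 6 statements merged into one kernel-verified Lean document; each statement's English description precedes it below -/
import Mathlib

section
/- Let B be a Boolean algebra with a contact relation δ satisfying x δ (y ∨ z) ⟺ (x δ y or x δ z). Suppose good tuples (b_j)_{j<m} and (b'_j)_{j<m} follow the same arrangement f : m → n in good tuples (a_i)_{i<n} and (a'_i)_{i<n} respectively. If the nerve graphs of (b_j) and (b'_j) coincide (i.e., b_i δ b_j ⟺ b'_i δ b'_j for all i, j), then the nerve graphs of (a_i) and (a'_i) coincide (a_i δ a_j ⟺ a'_i δ a'_j). -/
/-- A contact algebra structure on a Boolean algebra. -/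
structure ContactStruct (B : Type*) [BooleanAlgebra B] where
  delta : B → B → Prop
  symm : ∀ a b, delta a b → delta b a
  bot_not : ∀ a, ¬ delta ⊥ a
  refl : ∀ a, a ≠ ⊥ → delta a a
  sup_iff : ∀ x y z, delta x (y ⊔ z) ↔ (delta x y ∨ delta x z)

/-- A good tuple: a finite minimal cover whose distinct entries have meet `⊥`. -/
def IsGoodTuple {B : Type*} [BooleanAlgebra B] {n : ℕ} (a : Fin n → B) : Prop :=
  Finset.univ.sup a = ⊤ ∧ (∀ i j : Fin n, i ≠ j → a i ⊓ a j = ⊥) ∧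
    (∀ i j : Fin n, i ≠ j → ¬ a i ≤ a j)

lemma delta_finset_sup_iff {B : Type*} [BooleanAlgebra B] (C : ContactStruct B)
    {ι : Type*} (s : Finset ι) (g : ι → B) (x : B) :
    C.delta x (s.sup g) ↔ ∃ i ∈ s, C.delta x (g i) := by
  classical
  induction s using Finset.induction with
  | empty =>
      simp only [Finset.sup_empty, Finset.notMem_empty, false_and, exists_false, iff_false]
      exact fun h => C.bot_not x (C.symm _ _ h)
  | insert _ _ hj ih =>
      rename_i j t
      rw [Finset.sup_insert, C.sup_iff, ih]
      constructor
      · rintro (h | ⟨i, hi, h⟩)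
        · exact ⟨j, Finset.mem_insert_self _ _, h⟩
        · exact ⟨i, Finset.mem_insert_of_mem hi, h⟩
      · rintro ⟨i, hi, h⟩
        rcases Finset.mem_insert.1 hi with rfl | hi
        · exact Or.inl h
        · exact Or.inr ⟨i, hi, h⟩

lemma eq_sup_fiber {B : Type*} [BooleanAlgebra B] {m n : ℕ} (a : Fin n → B) (b : Fin m → B)
    (ha : IsGoodTuple a) (hb : IsGoodTuple b) (f : Fin m → Fin n)
    (hfollow : ∀ j, b j ≤ a (f j)) (i : Fin n) :
    a i = (Finset.univ.filter (fun j => f j = i)).sup b := by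
  classical
  apply le_antisymm
  · have h1 : a i = a i ⊓ Finset.univ.sup b := by rw [hb.1, inf_top_eq]
    rw [h1, Finset.sup_inf_distrib_left]
    apply Finset.sup_le
    intro j _
    by_cases hfi : f j = i
    · exact le_trans inf_le_right (Finset.le_sup (by simp [hfi]))
    · have : a i ⊓ b j = ⊥ := by
        have := ha.2.1 i (f j) (fun h => hfi h.symm)
        exact le_bot_iff.mp (le_trans (inf_le_inf_left _ (hfollow j)) this.le)
      simp [this]
  · apply Finset.sup_le
    intro j hj
    have := (Finset.mem_filter.1 hj).2
    exact this ▸ hfollow j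

/-- If good tuples `b`, `b'` follow the same arrangement `f` in good
tuples `a`, `a'` respectively and the nerve graphs of `b` and `b'` coincide, then
the nerve graphs of `a` and `a'` coincide. -/
theorem nerve_of_consolidations {B : Type*} [BooleanAlgebra B] (C : ContactStruct B)
    {m n : ℕ} (a a' : Fin n → B) (b b' : Fin m → B)
    (ha : IsGoodTuple a) (ha' : IsGoodTuple a') (hb : IsGoodTuple b) (hb' : IsGoodTuple b')
    (f : Fin m → Fin n) (hf : Function.Surjective f)
    (hfollow : ∀ j, b j ≤ a (f j)) (hfollow' : ∀ j, b' j ≤ a' (f j))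
    (hnerve : ∀ i j : Fin m, C.delta (b i) (b j) ↔ C.delta (b' i) (b' j)) :
    ∀ i j : Fin n, C.delta (a i) (a j) ↔ C.delta (a' i) (a' j) := by
  classical
  have key : ∀ (a : Fin n → B) (b : Fin m → B), IsGoodTuple a → IsGoodTuple b →
      (∀ j, b j ≤ a (f j)) → ∀ i j : Fin n,
      (C.delta (a i) (a j) ↔ ∃ p ∈ Finset.univ.filter (fun p => f p = i),
        ∃ q ∈ Finset.univ.filter (fun q => f q = j), C.delta (b p) (b q)) := by
    intro a b ha hb hfollow i j
    rw [eq_sup_fiber a b ha hb f hfollow i, eq_sup_fiber a b ha hb f hfollow j,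
      delta_finset_sup_iff]
    constructor
    · rintro ⟨q, hq, h⟩
      have := (delta_finset_sup_iff C _ b _).1 (C.symm _ _ h)
      rcases this with ⟨p, hp, h2⟩
      exact ⟨p, hp, q, hq, C.symm _ _ h2⟩
    · rintro ⟨p, hp, q, hq, h⟩
      exact ⟨q, hq, C.symm _ _ ((delta_finset_sup_iff C _ b _).2 ⟨p, hp, C.symm _ _ h⟩)⟩
  intro i j
  rw [key a b ha hb hfollow i j, key a' b' ha' hb' hfollow' i j]
  simp only [hnerve]
end

section
/- Let X be a compact Hausdorff space and let (a_i)_{i<n} and (b_j)_{j<m} be finite minimal covers of X by regular closed sets that merely touch (pairwise meets in the regular closed algebra are 0, i.e., pairwise intersections have empty interior). Then the family of nonzero sets a_i ∧ b_j = closure(interior(a_i ∩ b_j)), indexed by pairs (i,j) with a_i ∧ b_j ≠ ∅, is again such a cover, and it refines both (a_i) and (b_j). -/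
/-- Given two finite minimal covers of a compact Hausdorff space `X`
by regular closed sets that merely touch, the nonzero meets
`closure (interior (a i ∩ b j))` form again such a cover, refining both. -/
theorem common_refinement (X : Type*) [TopologicalSpace X] [CompactSpace X] [T2Space X]
    {n m : ℕ} (a : Fin n → Set X) (b : Fin m → Set X)
    (haRC : ∀ i, closure (interior (a i)) = a i)
    (hbRC : ∀ j, closure (interior (b j)) = b j)
    (haCov : ⋃ i, a i = Set.univ) (hbCov : ⋃ j, b j = Set.univ)
    (haTouch : ∀ i i' : Fin n, i ≠ i' → interior (a i ∩ a i') = ∅)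
    (hbTouch : ∀ j j' : Fin m, j ≠ j' → interior (b j ∩ b j') = ∅)
    (haMin : ∀ i i' : Fin n, i ≠ i' → ¬ a i ⊆ a i')
    (hbMin : ∀ j j' : Fin m, j ≠ j' → ¬ b j ⊆ b j') :
    let I := {p : Fin n × Fin m // closure (interior (a p.1 ∩ b p.2)) ≠ ∅}
    let c : I → Set X := fun p => closure (interior (a p.1.1 ∩ b p.1.2))
    (∀ p : I, closure (interior (c p)) = c p) ∧
    (⋃ p : I, c p = Set.univ) ∧
    (∀ p q : I, p ≠ q → interior (c p ∩ c q) = ∅) ∧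
    (∀ p q : I, p ≠ q → ¬ c p ⊆ c q) ∧
    (∀ p : I, c p ⊆ a p.1.1 ∧ c p ⊆ b p.1.2) := by

  intro I c
  have haCl : ∀ i, IsClosed (a i) := fun i => (haRC i) ▸ isClosed_closure
  have hbCl : ∀ j, IsClosed (b j) := fun j => (hbRC j) ▸ isClosed_closure
  have hsub : ∀ p : I, c p ⊆ a p.1.1 ∧ c p ⊆ b p.1.2 := by
    intro p
    constructor
    · calc c p ⊆ closure (a p.1.1 ∩ b p.1.2) := closure_mono interior_subset
        _ ⊆ closure (a p.1.1) := closure_mono Set.inter_subset_left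
        _ = a p.1.1 := (haCl p.1.1).closure_eq
    · calc c p ⊆ closure (a p.1.1 ∩ b p.1.2) := closure_mono interior_subset
        _ ⊆ closure (b p.1.2) := closure_mono Set.inter_subset_right
        _ = b p.1.2 := (hbCl p.1.2).closure_eq
  have hRC : ∀ p : I, closure (interior (c p)) = c p := by
    intro p
    show closure (interior (closure (interior (a p.1.1 ∩ b p.1.2)))) = _
    apply Set.Subset.antisymm
    · exact (closure_mono interior_subset).trans
        (closure_closure (s := interior (a p.1.1 ∩ b p.1.2))).subset
    · exact closure_mono isOpen_interior.subset_interior_closure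
  have hTouch : ∀ p q : I, p ≠ q → interior (c p ∩ c q) = ∅ := by
    intro p q hne
    have hval : p.1 ≠ q.1 := fun h => hne (Subtype.ext h)
    by_cases h1 : p.1.1 = q.1.1
    · have h2 : p.1.2 ≠ q.1.2 := fun h2 => hval (Prod.ext h1 h2)
      have : c p ∩ c q ⊆ b p.1.2 ∩ b q.1.2 :=
        Set.inter_subset_inter (hsub p).2 (hsub q).2
      have := interior_mono this
      rw [hbTouch _ _ h2] at this
      exact Set.subset_eq_empty this rfl
    · have : c p ∩ c q ⊆ a p.1.1 ∩ a q.1.1 :=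
        Set.inter_subset_inter (hsub p).1 (hsub q).1
      have := interior_mono this
      rw [haTouch _ _ h1] at this
      exact Set.subset_eq_empty this rfl
  refine ⟨hRC, ?_, hTouch, ?_, hsub⟩
  · -- cover
    apply Set.eq_univ_of_univ_subset
    have hU : Dense (⋃ i, interior (a i)) := by
      rw [dense_iff_closure_eq]
      apply Set.eq_univ_of_univ_subset
      rw [← haCov]
      exact Set.iUnion_subset fun i => (haRC i) ▸ closure_mono
        (Set.subset_iUnion (fun i => interior (a i)) i)
    have hV : Dense (⋃ j, interior (b j)) := by
      rw [dense_iff_closure_eq]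
      apply Set.eq_univ_of_univ_subset
      rw [← hbCov]
      exact Set.iUnion_subset fun j => (hbRC j) ▸ closure_mono
        (Set.subset_iUnion (fun j => interior (b j)) j)
    have hUV : Dense ((⋃ i, interior (a i)) ∩ (⋃ j, interior (b j))) :=
      hU.inter_of_isOpen_left hV (isOpen_iUnion fun _ => isOpen_interior)
    intro x _
    have hx : x ∈ closure ((⋃ i, interior (a i)) ∩ (⋃ j, interior (b j))) :=
      hUV x
    have hEq : ((⋃ i, interior (a i)) ∩ (⋃ j, interior (b j)))
        = ⋃ p : Fin n × Fin m, interior (a p.1 ∩ b p.2) := by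
      ext x
      simp only [Set.mem_inter_iff, Set.mem_iUnion, interior_inter]
      exact ⟨fun ⟨⟨i, hi⟩, ⟨j, hj⟩⟩ => ⟨(i, j), hi, hj⟩,
        fun ⟨p, h1, h2⟩ => ⟨⟨p.1, h1⟩, ⟨p.2, h2⟩⟩⟩
    rw [hEq, closure_iUnion_of_finite] at hx
    rcases Set.mem_iUnion.mp hx with ⟨p, hp⟩
    have hne : closure (interior (a p.1 ∩ b p.2)) ≠ ∅ :=
      fun h => (h ▸ hp : x ∈ (∅ : Set X))
    exact Set.mem_iUnion.mpr ⟨⟨p, hne⟩, hp⟩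
  · -- minimality
    intro p q hne hsubs
    have hW : (interior (a p.1.1 ∩ b p.1.2)).Nonempty := by
      by_contra h
      rw [Set.not_nonempty_iff_eq_empty] at h
      exact p.2 (by rw [h, closure_empty])
    have hW1 : interior (a p.1.1 ∩ b p.1.2) ⊆ c p ∩ c q :=
      Set.subset_inter subset_closure (subset_closure.trans hsubs)
    have := interior_maximal hW1 isOpen_interior
    rw [hTouch p q hne] at this
    rcases hW with ⟨x, hx⟩
    exact (this hx).elim
end

section
/- Let π : X₀ → X be an irreducible continuous surjection of compact Hausdorff spaces with X₀ totally disconnected. Then the map P ↦ π(P) from the Boolean algebra of clopen subsets of X₀ to the Boolean algebra of regular closed subsets of X is an injective Boolean algebra homomorphism. -/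
/-- For an irreducible continuous surjection `π : X₀ → X` of compact
Hausdorff spaces with `X₀` totally disconnected, `P ↦ π '' P` is an injective
Boolean algebra homomorphism from the clopen algebra of `X₀` to the regular
closed algebra of `X` (whose join is union, complement is `closure ∘ compl`, and
meet is `closure ∘ interior ∘ inter`). -/
theorem image_clopen_boolean_embedding {X₀ X : Type*}
    [TopologicalSpace X₀] [CompactSpace X₀] [T2Space X₀] [TotallyDisconnectedSpace X₀]
    [TopologicalSpace X] [CompactSpace X] [T2Space X]
    (π : X₀ → X) (hcont : Continuous π) (hsurj : Function.Surjective π)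
    (hirr : ∀ Y' : Set X₀, IsClosed Y' → Y' ≠ Set.univ → π '' Y' ≠ Set.univ) :
    (Function.Injective fun P : {P : Set X₀ // IsClopen P} => π '' P.1) ∧
    (∀ P Q : Set X₀, IsClopen P → IsClopen Q → π '' (P ∪ Q) = π '' P ∪ π '' Q) ∧
    (∀ P Q : Set X₀, IsClopen P → IsClopen Q →
      π '' (P ∩ Q) = closure (interior (π '' P ∩ π '' Q))) ∧
    (∀ P : Set X₀, IsClopen P → π '' Pᶜ = closure (π '' P)ᶜ) ∧
    (π '' (∅ : Set X₀) = ∅) ∧ (π '' (Set.univ : Set X₀) = Set.univ) := by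
  -- key: every nonempty open set contains a whole fiber
  have key : ∀ U : Set X₀, IsOpen U → U.Nonempty → ∃ y : X, π ⁻¹' {y} ⊆ U := by
    intro U hU hne
    have h1 : Uᶜ ≠ Set.univ := by
      simp [Set.compl_univ_iff, Set.eq_empty_iff_forall_notMem]
      exact hne.imp fun x hx => hx
    have h2 := hirr Uᶜ hU.isClosed_compl h1
    obtain ⟨y, hy⟩ := Set.ne_univ_iff_exists_notMem _ |>.1 h2
    refine ⟨y, fun x hx => ?_⟩
    by_contra hxU
    exact hy ⟨x, hxU, hx⟩
  have imgClosed : ∀ S : Set X₀, IsClosed S → IsClosed (π '' S) :=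
    fun S hS => (hS.isCompact.image hcont).isClosed
  -- complement law
  have hcompl : ∀ P : Set X₀, IsClopen P → π '' Pᶜ = closure (π '' P)ᶜ := by
    intro P hP
    apply subset_antisymm
    · rintro _ ⟨p, hp, rfl⟩
      rw [mem_closure_iff]
      intro V hV hpV
      obtain ⟨y, hy⟩ := key (π ⁻¹' V ∩ Pᶜ) ((hV.preimage hcont).inter hP.compl.isOpen)
        ⟨p, hpV, hp⟩
      obtain ⟨x, hx⟩ := hsurj y
      have hxU : x ∈ π ⁻¹' V ∩ Pᶜ := hy (by simp [hx])
      refine ⟨y, hx ▸ hxU.1, fun hyP => ?_⟩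
      obtain ⟨q, hq, hqy⟩ := hyP
      exact (hy (by simp [hqy])).2 hq
    · refine closure_minimal ?_ (imgClosed _ hP.compl.isClosed)
      intro y hy
      obtain ⟨x, hx⟩ := hsurj y
      exact ⟨x, fun hxP => hy ⟨x, hxP, hx⟩, hx⟩
  -- monotonicity / order reflection
  have mono : ∀ P Q : Set X₀, IsOpen P → IsClosed Q → π '' P ⊆ π '' Q → P ⊆ Q := by
    intro P Q hP hQ h p hp
    by_contra hpQ
    obtain ⟨y, hy⟩ := key (P ∩ Qᶜ) (hP.inter hQ.isOpen_compl) ⟨p, hp, hpQ⟩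
    obtain ⟨x, hx⟩ := hsurj y
    have hxU : x ∈ P ∩ Qᶜ := hy (by simp [hx])
    obtain ⟨q, hq, hqy⟩ := h ⟨x, hxU.1, hx⟩
    exact (hy (by simp [hqy])).2 hq
  refine ⟨?_, fun P Q _ _ => Set.image_union π P Q, ?_, hcompl, Set.image_empty π,
    Set.image_univ.trans hsurj.range_eq⟩
  · rintro ⟨P, hP⟩ ⟨Q, hQ⟩ h
    simp only at h
    exact Subtype.ext (subset_antisymm (mono P Q hP.isOpen hQ.isClosed h.le)
      (mono Q P hQ.isOpen hP.isClosed h.ge))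
  · intro P Q hP hQ
    have hPQ : IsClopen (P ∩ Q) := hP.inter hQ
    -- W S := (π '' Sᶜ)ᶜ = { y | fiber ⊆ S }
    have hW : ∀ (S : Set X₀) (y : X), y ∈ (π '' Sᶜ)ᶜ ↔ π ⁻¹' {y} ⊆ S := by
      intro S y
      constructor
      · intro h x hx
        by_contra hxS
        exact h ⟨x, hxS, hx⟩
      · rintro h ⟨x, hxS, rfl⟩
        exact hxS (h rfl)
    have regc : π '' (P ∩ Q) = closure (π '' (P ∩ Q)ᶜ)ᶜ := by
      have := hcompl (P ∩ Q)ᶜ hPQ.compl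
      rwa [compl_compl] at this
    rw [regc]
    apply subset_antisymm
    · -- (π '' (P∩Q)ᶜ)ᶜ ⊆ interior (π''P ∩ π''Q)
      apply closure_mono
      apply interior_maximal ?_ (imgClosed _ hPQ.compl.isClosed).isOpen_compl
      intro y hy
      have hfib := (hW _ y).1 hy
      obtain ⟨x, hx⟩ := hsurj y
      have hxPQ : x ∈ P ∩ Q := hfib (by simp [hx])
      exact ⟨⟨x, hxPQ.1, hx⟩, ⟨x, hxPQ.2, hx⟩⟩
    · -- interior (π''P ∩ π''Q) ⊆ closure (π'' (P∩Q)ᶜ)ᶜ ... enough to land in closure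
      have : interior (π '' P ∩ π '' Q) ⊆ closure (π '' (P ∩ Q)ᶜ)ᶜ := by
        intro y hy
        rw [mem_closure_iff]
        intro N hN hyN
        set V := interior (π '' P ∩ π '' Q) with hV
        have hU1 : ((π ⁻¹' (N ∩ V)) ∩ P).Nonempty := by
          have hyP : y ∈ π '' P := (interior_subset hy).1
          obtain ⟨x, hxP, hxy⟩ := hyP
          exact ⟨x, by simp [hxy, hyN, hy], hxP⟩
        obtain ⟨z, hz⟩ := key _ (((hN.inter isOpen_interior).preimage hcont).inter
          hP.isOpen) hU1
        obtain ⟨x0, hx0⟩ := hsurj z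
        have hx0U : x0 ∈ (π ⁻¹' (N ∩ V)) ∩ P := hz (by simp [hx0])
        have hzV : z ∈ V := by
          have h' : π x0 ∈ N ∩ V := hx0U.1
          rw [hx0] at h'; exact h'.2
        have hzQ : z ∈ π '' Q := (interior_subset hzV).2
        obtain ⟨q, hqQ, hqz⟩ := hzQ
        have hqU1 : q ∈ π ⁻¹' (N ∩ V) ∩ P := hz (by simp [hqz])
        have hU2 : ((π ⁻¹' (N ∩ V)) ∩ (P ∩ Q)).Nonempty :=
          ⟨q, hqU1.1, hqU1.2, hqQ⟩
        obtain ⟨w, hw⟩ := key _ (((hN.inter isOpen_interior).preimage hcont).inter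
          hPQ.isOpen) hU2
        obtain ⟨x1, hx1⟩ := hsurj w
        have hx1U : x1 ∈ (π ⁻¹' (N ∩ V)) ∩ (P ∩ Q) := hw (by simp [hx1])
        refine ⟨w, ?_, (hW _ w).2 fun a ha => (hw ha).2⟩
        have h' : π x1 ∈ N ∩ V := hx1U.1
        rw [hx1] at h'; exact h'.1
      exact closure_minimal this isClosed_closure
end

section
/- Let π : X₀ → X be an irreducible continuous surjection of compact Hausdorff spaces with X₀ totally disconnected (zero-dimensional). Then the image under π of the clopen algebra of X₀, i.e., {π(P) : P clopen in X₀}, is a basis of closed sets for X: for every closed F ⊆ X and x ∉ F, there is a clopen P ⊆ X₀ with F ⊆ π(P) and x ∉ π(P). -/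
/-- Compact-set version: a compact set inside an open set is inside a clopen subset. -/
lemma compact_exists_isClopen_in_isOpen' {X₀ : Type*} [TopologicalSpace X₀]
    [CompactSpace X₀] [T2Space X₀] [TotallyDisconnectedSpace X₀]
    {K U : Set X₀} (hK : IsCompact K) (hU : IsOpen U) (hKU : K ⊆ U) :
    ∃ V : Set X₀, IsClopen V ∧ K ⊆ V ∧ V ⊆ U := by
  choose V hV hxV hVU using fun x (hx : x ∈ K) =>
    compact_exists_isClopen_in_isOpen hU (hKU hx)
  obtain ⟨t, ht⟩ := hK.elim_nhds_subcover' (fun x hx => V x hx)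
    (fun x hx => (hV x hx).2.mem_nhds (hxV x hx))
  refine ⟨⋃ x ∈ t, V x x.2, ?_, ht, ?_⟩
  · exact isClopen_biUnion_finset fun x _ => hV x x.2
  · exact Set.iUnion₂_subset fun x _ => hVU x x.2

/-- For an irreducible continuous surjection `π : X₀ → X` of compact
Hausdorff spaces with `X₀` totally disconnected, the images of clopen sets form a
basis of closed sets of `X`: for every closed `F` and `x ∉ F` there is a clopen
`P ⊆ X₀` with `F ⊆ π '' P` and `x ∉ π '' P`. -/
theorem image_clopen_closed_basis {X₀ X : Type*}
    [TopologicalSpace X₀] [CompactSpace X₀] [T2Space X₀] [TotallyDisconnectedSpace X₀]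
    [TopologicalSpace X] [CompactSpace X] [T2Space X]
    (π : X₀ → X) (hcont : Continuous π) (hsurj : Function.Surjective π)
    (hirr : ∀ Y' : Set X₀, IsClosed Y' → Y' ≠ Set.univ → π '' Y' ≠ Set.univ) :
    ∀ F : Set X, IsClosed F → ∀ x ∉ F,
      ∃ P : Set X₀, IsClopen P ∧ F ⊆ π '' P ∧ x ∉ π '' P := by
  intro F hF x hx
  have hK : IsCompact (π ⁻¹' {x}) := (isClosed_singleton.preimage hcont).isCompact
  have hKU : π ⁻¹' {x} ⊆ (π ⁻¹' F)ᶜ := fun y hy hyF => by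
    simp only [Set.mem_preimage, Set.mem_singleton_iff] at hy
    exact hx (hy ▸ hyF)
  obtain ⟨Q, hQ, hKQ, hQU⟩ :=
    compact_exists_isClopen_in_isOpen' hK (hF.preimage hcont).isOpen_compl hKU
  refine ⟨Qᶜ, hQ.compl, ?_, ?_⟩
  · intro z hz
    obtain ⟨y, rfl⟩ := hsurj z
    exact ⟨y, fun hyQ => hQU hyQ hz, rfl⟩
  · rintro ⟨y, hyP, rfl⟩
    exact hyP (hKQ rfl)
end

section
/- Let X be a compact Hausdorff space, (a_i)_{i<n} a finite cover of X by regular closed sets with pairwise intersections of empty interior, no containments among distinct members, and all members nonempty. If a regular closed cover (b_j)_{j<m} of the same kind refines (a_i) (each b_j is contained in some a_i), then the function f : m → n sending j to the unique i with b_j ⊆ a_i is well defined and surjective. -/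
/-- If `(b j)` is a regular closed minimal merely-touching cover
refining another such cover `(a i)` of a compact Hausdorff space, then the map
sending each `j` to the unique `i` with `b j ⊆ a i` is well defined and
surjective. -/
theorem refinement_arrangement (X : Type*) [TopologicalSpace X] [CompactSpace X] [T2Space X]
    {n m : ℕ} (a : Fin n → Set X) (b : Fin m → Set X)
    (haRC : ∀ i, closure (interior (a i)) = a i)
    (hbRC : ∀ j, closure (interior (b j)) = b j)
    (haCov : ⋃ i, a i = Set.univ) (hbCov : ⋃ j, b j = Set.univ)
    (haTouch : ∀ i i' : Fin n, i ≠ i' → interior (a i ∩ a i') = ∅)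
    (hbTouch : ∀ j j' : Fin m, j ≠ j' → interior (b j ∩ b j') = ∅)
    (haMin : ∀ i i' : Fin n, i ≠ i' → ¬ a i ⊆ a i')
    (hbMin : ∀ j j' : Fin m, j ≠ j' → ¬ b j ⊆ b j')
    (haNe : ∀ i, (a i).Nonempty) (hbNe : ∀ j, (b j).Nonempty)
    (hrefines : ∀ j, ∃ i, b j ⊆ a i) :
    ∃ f : Fin m → Fin n,
      (∀ j, b j ⊆ a (f j)) ∧
      (∀ j i, b j ⊆ a i → i = f j) ∧
      Function.Surjective f := by
  have hbInt : ∀ j, (interior (b j)).Nonempty := by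
    intro j
    by_contra h
    rw [Set.not_nonempty_iff_eq_empty] at h
    have := hbRC j
    rw [h, closure_empty] at this
    exact (hbNe j).ne_empty this.symm
  choose f hf using hrefines
  have huniq : ∀ j i, b j ⊆ a i → i = f j := by
    intro j i h
    by_contra hne
    have h2 : interior (b j) ⊆ interior (a i ∩ a (f j)) :=
      interior_mono (Set.subset_inter h (hf j))
    rw [haTouch i (f j) hne] at h2
    exact (hbInt j).ne_empty (Set.subset_eq_empty h2 rfl)
  refine ⟨f, hf, huniq, ?_⟩
  intro i
  have haInt : (interior (a i)).Nonempty := by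
    by_contra h
    rw [Set.not_nonempty_iff_eq_empty] at h
    have := haRC i
    rw [h, closure_empty] at this
    exact (haNe i).ne_empty this.symm
  obtain ⟨x, hx⟩ := haInt
  have hmeet : ∃ j, (interior (a i) ∩ interior (b j)).Nonempty := by
    by_contra h
    push_neg at h
    have hd : ∀ j, interior (a i) ∩ b j = ∅ := by
      intro j
      rw [← hbRC j]
      have hdis : Disjoint (interior (a i)) (interior (b j)) :=
        Set.disjoint_iff_inter_eq_empty.mpr (h j)
      exact Set.disjoint_iff_inter_eq_empty.mp (hdis.closure_right isOpen_interior)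
    have hxU : x ∈ ⋃ j, b j := hbCov ▸ Set.mem_univ x
    obtain ⟨j, hj⟩ := Set.mem_iUnion.mp hxU
    exact Set.nonempty_iff_ne_empty.mp (⟨x, hx, hj⟩ : (interior (a i) ∩ b j).Nonempty) (hd j)
  obtain ⟨j, y, hy1, hy2⟩ := hmeet
  refine ⟨j, ?_⟩
  by_contra hne
  have h2 : interior (b j) ∩ interior (a i) ⊆ interior (a (f j) ∩ a i) :=
    interior_maximal
      (Set.inter_subset_inter (subset_trans interior_subset (hf j)) interior_subset)
      (isOpen_interior.inter isOpen_interior)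
  rw [haTouch (f j) i hne] at h2
  exact Set.not_nonempty_empty ⟨y, h2 ⟨hy2, hy1⟩⟩
end

section
/- Let f : m → n be a pattern, i.e., a surjection between natural numbers (viewed as {0,…,m−1} → {0,…,n−1}) such that |i − j| ≤ 1 implies |f(i) − f(j)| ≤ 1. Suppose in a contact algebra, (b_j)_{j<m} is a chain (a good tuple with b_i δ b_j ⟹ |i − j| ≤ 1) following the arrangement f in a good tuple (a_i)_{i<n} with the consolidation property a_i = ⋁_{j∈f⁻¹(i)} b_j. Then (a_i)_{i<n} is also a chain: a_i δ a_{i'} implies |i − i'| ≤ 1. -/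
theorem delta_finset_sup {B : Type*} [BooleanAlgebra B] (C : ContactStruct B)
    {ι : Type*} (s : Finset ι) (g : ι → B) (x : B) (h : C.delta x (s.sup g)) :
    ∃ j ∈ s, C.delta x (g j) := by
  induction s using Finset.cons_induction with
  | empty => simp at h; exact absurd (C.symm _ _ h) (C.bot_not x)
  | cons a s ha ih =>
    rw [Finset.sup_cons, C.sup_iff] at h
    rcases h with h | h
    · exact ⟨a, Finset.mem_cons_self a s, h⟩
    · obtain ⟨j, hj, hd⟩ := ih h
      exact ⟨j, Finset.mem_cons_of_mem hj, hd⟩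

/-- If a chain `(b j)` follows a pattern `f` in a good tuple `(a i)`
with the consolidation property, then `(a i)` is also a chain. -/
theorem chain_consolidation_of_pattern {B : Type*} [BooleanAlgebra B] (C : ContactStruct B)
    {m n : ℕ} (a : Fin n → B) (b : Fin m → B)
    (ha : IsGoodTuple a) (hb : IsGoodTuple b)
    (f : Fin m → Fin n) (hf : Function.Surjective f)
    (hpattern : ∀ i j : Fin m, |(i : ℤ) - (j : ℤ)| ≤ 1 → |((f i : ℕ) : ℤ) - ((f j : ℕ) : ℤ)| ≤ 1)
    (hchain : ∀ i j : Fin m, C.delta (b i) (b j) → |(i : ℤ) - (j : ℤ)| ≤ 1)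
    (hfollow : ∀ j, b j ≤ a (f j))
    (hconsol : ∀ i : Fin n, a i = (Finset.univ.filter fun j => f j = i).sup b) :
    ∀ i i' : Fin n, C.delta (a i) (a i') → |(i : ℤ) - (i' : ℤ)| ≤ 1 := by
  intro i i' hd
  rw [hconsol i'] at hd
  obtain ⟨j', hj', hd'⟩ := delta_finset_sup C _ b _ hd
  rw [hconsol i] at hd'
  obtain ⟨j, hj, hd2⟩ := delta_finset_sup C _ b _ (C.symm _ _ hd')
  simp only [Finset.mem_filter] at hj hj'
  have h1 := hchain _ _ hd2
  have h2 := hpattern _ _ h1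
  rw [hj.2, hj'.2] at h2
  rw [abs_sub_comm] at h2
  simpa using h2
end
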